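/- Let the Cornu spiral γ: ℝ → ℝ² of parameter λ ≠ 0 be given by γ(s) = (∫₀ˢ cos(λt²/2) dt, ∫₀ˢ sin(λt²/2) dt). Then γ is a bounded curve (its image is contained in a bounded subset of ℝ²) of infinite length (it is parametrized by arclength: |γ'(s)| = 1 for all s, and its domain is all of ℝ). -/

import Mathlib

open intervalIntegral

/-- Key bound via integration by parts: if `F' = λ t f t` with `|f| ≤ 1`, `|F| ≤ 1`,
then the Fresnel-type integral `∫₀ˢ f` is uniformly bounded for `s ≥ 0`. -/
lemma fresnel_aux (lam : ℝ) (hlam : lam ≠ 0) (f F : ℝ → ℝ)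
    (hfc : Continuous f) (hFc : Continuous F)
    (hfb : ∀ t, |f t| ≤ 1) (hFb : ∀ t, |F t| ≤ 1)
    (hFd : ∀ t, HasDerivAt F (lam * t * f t) t) :
    ∀ s : ℝ, 0 ≤ s → |∫ t in (0:ℝ)..s, f t| ≤ 1 + 3 / |lam| := by
  intro s hs
  have hl : 0 < |lam| := abs_pos.2 hlam
  rcases le_or_gt s 1 with h1 | h1
  · have := intervalIntegral.norm_integral_le_of_norm_le_const (C := 1)
      (f := f) (a := 0) (b := s) (fun t _ => hfb t)
    simp only [Real.norm_eq_abs, sub_zero] at this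
    have : |∫ t in (0:ℝ)..s, f t| ≤ |s| := by simpa using this
    have h3 : 0 ≤ 3 / |lam| := by positivity
    calc |∫ t in (0:ℝ)..s, f t| ≤ |s| := this
      _ ≤ 1 := by rw [abs_of_nonneg hs]; exact h1
      _ ≤ 1 + 3 / |lam| := by linarith
  · -- s > 1
    set g : ℝ → ℝ := fun t => F t / (lam * t) with hg
    have hgd : ∀ t ∈ Set.uIcc (1:ℝ) s,
        HasDerivAt g (f t - F t / (lam * t ^ 2)) t := by
      intro t ht
      rw [Set.uIcc_of_le h1.le] at ht
      have ht1 : (1:ℝ) ≤ t := ht.1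
      have htne : lam * t ≠ 0 := by positivity
      have hd := (hFd t).div ((hasDerivAt_id t).const_mul lam) htne
      have hd' : HasDerivAt g ((lam * t * f t * (lam * t) - F t * (lam * 1)) / (lam * t) ^ 2) t := hd
      convert hd' using 1
      field_simp
    have hcd : ContinuousOn (fun t => f t - F t / (lam * t ^ 2)) (Set.uIcc 1 s) := by
      apply hfc.continuousOn.sub
      apply (hFc.continuousOn.div (by fun_prop))
      intro t ht
      rw [Set.uIcc_of_le h1.le] at ht
      have : (1:ℝ) ≤ t := ht.1
      positivity
    have key := intervalIntegral.integral_eq_sub_of_hasDerivAt hgd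
      (hcd.intervalIntegrable)
    have hib : IntervalIntegrable (fun t => F t / (lam * t ^ 2)) MeasureTheory.volume 1 s := by
      apply ContinuousOn.intervalIntegrable
      apply (hFc.continuousOn.div (by fun_prop))
      intro t ht
      rw [Set.uIcc_of_le h1.le] at ht
      have : (1:ℝ) ≤ t := ht.1
      positivity
    have hsplit : (∫ t in (1:ℝ)..s, f t)
        = (g s - g 1) + ∫ t in (1:ℝ)..s, F t / (lam * t ^ 2) := by
      rw [← key, ← intervalIntegral.integral_add hcd.intervalIntegrable hib]
      congr 1; funext t; ring
    have hrem : |∫ t in (1:ℝ)..s, F t / (lam * t ^ 2)| ≤ 1 / |lam| := by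
      have hb : ∀ t ∈ Set.uIcc (1:ℝ) s, ‖F t / (lam * t ^ 2)‖ ≤ |lam|⁻¹ * t ^ (-2:ℤ) := by
        intro t ht
        rw [Set.uIcc_of_le h1.le] at ht
        have ht1 : (1:ℝ) ≤ t := ht.1
        have ht0 : (0:ℝ) < t := by linarith
        rw [Real.norm_eq_abs, abs_div, abs_mul, abs_of_pos (by positivity : (0:ℝ) < t^2)]
        rw [div_le_iff₀ (by positivity)]
        have : |lam|⁻¹ * t ^ (-2:ℤ) * (|lam| * t ^ 2) = 1 := by
          field_simp
        rw [this]
        exact hFb t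
      have hHi : IntervalIntegrable (fun t => |lam|⁻¹ * t ^ (-2:ℤ)) MeasureTheory.volume 1 s := by
        apply ContinuousOn.intervalIntegrable
        apply ContinuousOn.mul continuousOn_const
        intro t ht
        rw [Set.uIcc_of_le h1.le] at ht
        have : (1:ℝ) ≤ t := ht.1
        exact (continuousAt_zpow₀ _ _ (Or.inl (by intro hc; rw [hc] at this; linarith))).continuousWithinAt
      have hval : (∫ t in (1:ℝ)..s, |lam|⁻¹ * t ^ (-2:ℤ)) = |lam|⁻¹ * (1 - s⁻¹) := by
        rw [intervalIntegral.integral_const_mul, integral_zpow]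
        · congr 1; norm_num; ring
        · right; refine ⟨by norm_num, ?_⟩
          intro hc; rcases Set.mem_uIcc.1 hc with ⟨ha,_⟩|⟨_,hb2⟩ <;> linarith
      have hnn : (0:ℝ) ≤ |lam|⁻¹ * (1 - s⁻¹) := by
        have hsi : s⁻¹ ≤ 1 := by
          rw [inv_le_one_iff₀]; right; linarith
        have : 0 ≤ 1 - s⁻¹ := by linarith
        positivity
      calc |∫ t in (1:ℝ)..s, F t / (lam * t ^ 2)|
          ≤ |∫ t in (1:ℝ)..s, |lam|⁻¹ * t ^ (-2:ℤ)| := by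
            have := intervalIntegral.norm_integral_le_abs_of_norm_le (μ := MeasureTheory.volume)
              (a := 1) (b := s) (f := fun t => F t / (lam * t ^ 2)) ?_ hHi
            · simpa using this
            · filter_upwards [MeasureTheory.ae_restrict_mem measurableSet_uIoc] with t ht
              refine hb t ?_
              rw [Set.uIoc_of_le h1.le] at ht
              rw [Set.uIcc_of_le h1.le]
              exact ⟨ht.1.le, ht.2⟩
        _ = |lam|⁻¹ * (1 - s⁻¹) := by rw [hval, abs_of_nonneg hnn]
        _ ≤ 1 / |lam| := by
            rw [one_div]
            have h1' : 1 - s⁻¹ ≤ 1 := by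
              have : 0 < s⁻¹ := by positivity
              linarith
            nlinarith [le_of_lt (inv_pos.2 hl)]
    have hgb : ∀ t : ℝ, 1 ≤ t → |g t| ≤ 1 / |lam| := by
      intro t ht
      rw [hg]
      simp only
      rw [abs_div, abs_mul]
      have ht0 : 0 < |t| := by rw [abs_of_pos (by linarith)]; linarith
      rw [div_le_div_iff₀ (by positivity) hl]
      have h1t : 1 ≤ |t| := by rw [abs_of_pos (by linarith)]; exact ht
      calc |F t| * |lam| ≤ 1 * |lam| := by
            apply mul_le_mul_of_nonneg_right (hFb t) hl.le
        _ = |lam| := one_mul _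
        _ ≤ |lam| * |t| := le_mul_of_one_le_right hl.le h1t
        _ = 1 * (|lam| * |t|) := (one_mul _).symm
    have h01 : |∫ t in (0:ℝ)..1, f t| ≤ 1 := by
      have := intervalIntegral.norm_integral_le_of_norm_le_const (C := 1)
        (f := f) (a := 0) (b := 1) (fun t _ => hfb t)
      simpa using this
    have hsum : (∫ t in (0:ℝ)..s, f t)
        = (∫ t in (0:ℝ)..1, f t) + ∫ t in (1:ℝ)..s, f t := by
      rw [intervalIntegral.integral_add_adjacent_intervals
        (hfc.intervalIntegrable 0 1) (hfc.intervalIntegrable 1 s)]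
    rw [hsum, hsplit]
    have hgs := hgb s h1.le
    have hg1 := hgb 1 le_rfl
    calc |(∫ t in (0:ℝ)..1, f t) + ((g s - g 1) + ∫ t in (1:ℝ)..s, F t / (lam*t^2))|
        ≤ |∫ t in (0:ℝ)..1, f t| + |g s| + |g 1| + |∫ t in (1:ℝ)..s, F t / (lam*t^2)| := by
          calc _ ≤ |∫ t in (0:ℝ)..1, f t| + |(g s - g 1) + ∫ t in (1:ℝ)..s, F t/(lam*t^2)| :=
                abs_add_le _ _
            _ ≤ |∫ t in (0:ℝ)..1, f t| + (|g s - g 1| + |∫ t in (1:ℝ)..s, F t/(lam*t^2)|) := by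
                gcongr; exact abs_add_le _ _
            _ ≤ _ := by
                have h2 : |g s - g 1| ≤ |g s| + |g 1| := abs_sub _ _
                linarith
      _ ≤ 1 + 1/|lam| + 1/|lam| + 1/|lam| := by
          gcongr <;> first | exact h01 | exact hgs | exact hg1 | exact hrem
      _ = 1 + 3 / |lam| := by ring

/-- Odd symmetry of the primitive of an even function. -/
lemma fresnel_odd (f : ℝ → ℝ) (hfeven : ∀ t, f (-t) = f t) (s : ℝ) :
    (∫ t in (0:ℝ)..(-s), f t) = -∫ t in (0:ℝ)..s, f t := by
  have h := intervalIntegral.integral_comp_neg (a := (0:ℝ)) (b := s) (f := f)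
  simp only [hfeven, neg_zero] at h
  calc (∫ t in (0:ℝ)..(-s), f t) = -∫ t in (-s)..(0:ℝ), f t := by
        rw [intervalIntegral.integral_symm]
    _ = -∫ t in (0:ℝ)..s, f t := by rw [← h]

/-- The Cornu spiral `γ(s) = (∫₀ˢ cos(λt²/2) dt, ∫₀ˢ sin(λt²/2) dt)` of parameter
`λ ≠ 0` is a bounded curve of infinite length: its image is bounded, it is defined on
all of `ℝ`, and it is parametrized by arclength (`|γ'(s)| = 1`). -/
theorem cornu_spiral_bounded_unit_speed
    (lam : ℝ) (hlam : lam ≠ 0)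
    (x y : ℝ → ℝ)
    (hx : ∀ s, x s = ∫ t in (0:ℝ)..s, Real.cos (lam * t ^ 2 / 2))
    (hy : ∀ s, y s = ∫ t in (0:ℝ)..s, Real.sin (lam * t ^ 2 / 2)) :
    (∃ C : ℝ, ∀ s : ℝ, |x s| ≤ C ∧ |y s| ≤ C) ∧
    (∀ s : ℝ, HasDerivAt x (Real.cos (lam * s ^ 2 / 2)) s ∧
              HasDerivAt y (Real.sin (lam * s ^ 2 / 2)) s ∧
              Real.sqrt ((deriv x s) ^ 2 + (deriv y s) ^ 2) = 1) := by
  have hxe : x = fun s => ∫ t in (0:ℝ)..s, Real.cos (lam * t ^ 2 / 2) := funext hx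
  have hye : y = fun s => ∫ t in (0:ℝ)..s, Real.sin (lam * t ^ 2 / 2) := funext hy
  subst hxe hye
  set fc : ℝ → ℝ := fun t => Real.cos (lam * t ^ 2 / 2) with hfc_def
  set fs : ℝ → ℝ := fun t => Real.sin (lam * t ^ 2 / 2) with hfs_def
  have hfcc : Continuous fc := by fun_prop
  have hfsc : Continuous fs := by fun_prop
  have hinner : ∀ t : ℝ, HasDerivAt (fun u => lam * u ^ 2 / 2) (lam * t) t := by
    intro t
    have : HasDerivAt (fun u : ℝ => lam * u ^ 2 / 2) (lam * (2 * t) / 2) t :=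
      (((hasDerivAt_pow 2 t).const_mul lam).div_const 2).congr_deriv (by ring)
    exact this.congr_deriv (by ring)
  have hFs : ∀ t : ℝ, HasDerivAt fs (lam * t * fc t) t := by
    intro t
    have := (Real.hasDerivAt_sin (lam * t ^ 2 / 2)).comp t (hinner t)
    exact this.congr_deriv (by ring)
  have hFc : ∀ t : ℝ, HasDerivAt (fun u => -fc u) (lam * t * fs t) t := by
    intro t
    have := ((Real.hasDerivAt_cos (lam * t ^ 2 / 2)).comp t (hinner t)).neg
    exact this.congr_deriv (by ring)
  have hceven : ∀ t : ℝ, fc (-t) = fc t := by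
    intro t; simp only [hfc_def, neg_sq]
  have hseven : ∀ t : ℝ, fs (-t) = fs t := by
    intro t; simp only [hfs_def, neg_sq]
  have hcb : ∀ t, |fc t| ≤ 1 := fun t => Real.abs_cos_le_one _
  have hsb : ∀ t, |fs t| ≤ 1 := fun t => Real.abs_sin_le_one _
  have hncb : ∀ t, |-fc t| ≤ 1 := fun t => by rw [abs_neg]; exact hcb t
  have hxbound := fresnel_aux lam hlam fc fs hfcc hfsc hcb hsb hFs
  have hybound := fresnel_aux lam hlam fs (fun u => -fc u) hfsc hfcc.neg hsb hncb hFc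
  constructor
  · refine ⟨1 + 3 / |lam|, fun s => ?_⟩
    rcases le_or_gt 0 s with hs | hs
    · exact ⟨hxbound s hs, hybound s hs⟩
    · have hns : (0:ℝ) ≤ -s := by linarith
      have hcx := fresnel_odd fc hceven (-s)
      have hcy := fresnel_odd fs hseven (-s)
      rw [neg_neg] at hcx hcy
      constructor
      · simp only
        rw [hcx, abs_neg]
        exact hxbound (-s) hns
      · simp only
        rw [hcy, abs_neg]
        exact hybound (-s) hns
  · intro s
    have hdx : HasDerivAt (fun u => ∫ t in (0:ℝ)..u, fc t) (fc s) s :=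
      integral_hasDerivAt_right (hfcc.intervalIntegrable 0 s)
        (hfcc.stronglyMeasurableAtFilter _ _) hfcc.continuousAt
    have hdy : HasDerivAt (fun u => ∫ t in (0:ℝ)..u, fs t) (fs s) s :=
      integral_hasDerivAt_right (hfsc.intervalIntegrable 0 s)
        (hfsc.stronglyMeasurableAtFilter _ _) hfsc.continuousAt
    refine ⟨hdx, hdy, ?_⟩
    rw [hdx.deriv, hdy.deriv]
    rw [hfc_def, hfs_def]
    simp only
    rw [Real.cos_sq_add_sin_sq, Real.sqrt_one]
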